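/- Let G be a connected finite simple graph admitting an NLC-decomposition tree T of width w and depth d. Then G admits an NLC⁺-decomposition tree T₊ of width w and depth at most 2d; moreover T₊ can be chosen so that the color of each vertex of G in the colored graph produced at the root of T₊ equals its color in the colored graph produced at the root of T. -/

import Mathlib

def joinGraph {k : ℕ} {α β : Type*} (G₁ : SimpleGraph α) (G₂ : SimpleGraph β)
    (c₁ : α → Fin k) (c₂ : β → Fin k) (S : Set (Fin k × Fin k)) : SimpleGraph (α ⊕ β) where
  Adj x y :=
    match x, y with
    | Sum.inl a, Sum.inl b => G₁.Adj a b
    | Sum.inr a, Sum.inr b => G₂.Adj a b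
    | Sum.inl a, Sum.inr b => (c₁ a, c₂ b) ∈ S
    | Sum.inr b, Sum.inl a => (c₁ a, c₂ b) ∈ S
  symm := by
    constructor
    rintro (a | a) (b | b) h
    · exact h.symm
    · exact h
    · exact h
    · exact h.symm
  loopless := by
    constructor
    rintro (a | a) h
    · exact h.ne rfl
    · exact h.ne rfl


/-- The disjoint union of a family of graphs, on the sigma type. -/
def sigmaGraph {ι : Type*} {f : ι → Type*} (G : ∀ i, SimpleGraph (f i)) :
    SimpleGraph (Σ i, f i) where
  Adj x y := ∃ (i : ι) (a b : f i), (G i).Adj a b ∧ x = ⟨i, a⟩ ∧ y = ⟨i, b⟩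
  symm := by
    constructor
    rintro x y ⟨i, a, b, hab, rfl, rfl⟩
    exact ⟨i, b, a, hab.symm, rfl, rfl⟩
  loopless := by
    constructor
    rintro ⟨i, a⟩ ⟨i', a', b', hab, h1, h2⟩
    rw [h1] at h2
    injection h2 with h3 h4
    obtain rfl := h4
    exact hab.ne rfl

/-- NLC-decomposition trees of width `k`: leaves create colored vertices, internal nodes
have two ordered children, carry a set `S` of pairs of colors and an optional recoloring. -/
inductive NLCTree (k : ℕ) : Type
  | leaf (c : Fin k) : NLCTree k
  | node (S : Set (Fin k × Fin k)) (R : Option (Fin k → Fin k)) (l r : NLCTree k) : NLCTree k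

namespace NLCTree

variable {k : ℕ}

def V : NLCTree k → Type
  | leaf _ => Unit
  | node _ _ l r => l.V ⊕ r.V

def coloring : (t : NLCTree k) → t.V → Fin k
  | leaf c => fun _ => c
  | node _ R l r => fun v => (R.getD id) (Sum.elim l.coloring r.coloring v)

def graph : (t : NLCTree k) → SimpleGraph t.V
  | leaf _ => ⊥
  | node S _ l r => joinGraph l.graph r.graph l.coloring r.coloring S

/-- The depth of the tree: maximum number of edges on a root-to-leaf path. -/
def depth : NLCTree k → ℕ
  | leaf _ => 0
  | node _ _ l r => max l.depth r.depth + 1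

end NLCTree


/-- NLC⁺-decomposition trees of width `k`: leaves create colored vertices; `join` nodes have
two ordered children and carry a set `S` of pairs of colors and a recoloring `R`;
`par` nodes have an arbitrary (finite) number of children and produce a disjoint union. -/
inductive NLCPlusTree (k : ℕ) : Type
  | leaf (c : Fin k) : NLCPlusTree k
  | join (S : Set (Fin k × Fin k)) (R : Fin k → Fin k) (l r : NLCPlusTree k) : NLCPlusTree k
  | par (m : ℕ) (ts : Fin m → NLCPlusTree k) : NLCPlusTree k

namespace NLCPlusTree

variable {k : ℕ}

def V : NLCPlusTree k → Type
  | leaf _ => Unit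
  | join _ _ l r => l.V ⊕ r.V
  | par _ ts => Σ i, (ts i).V

def coloring : (t : NLCPlusTree k) → t.V → Fin k
  | leaf c => fun _ => c
  | join _ R l r => fun v => R (Sum.elim l.coloring r.coloring v)
  | par _ ts => fun v => (ts v.1).coloring v.2

def graph : (t : NLCPlusTree k) → SimpleGraph t.V
  | leaf _ => ⊥
  | join S _ l r => joinGraph l.graph r.graph l.coloring r.coloring S
  | par _ ts => sigmaGraph fun i => (ts i).graph

/-- Whether the root of the tree is a `par` (∥) node. -/
def isPar : NLCPlusTree k → Prop
  | par _ _ => True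
  | _ => False

/-- Validity of an NLC⁺-decomposition tree: every `par` node has at least two children,
no child of a `par` node is a `par` node (so every non-root `par` node has a `join`
parent), and the graph produced at every `join` node is connected. -/
def valid : NLCPlusTree k → Prop
  | leaf _ => True
  | join S _ l r =>
      l.valid ∧ r.valid ∧ (joinGraph l.graph r.graph l.coloring r.coloring S).Connected
  | par m ts => 2 ≤ m ∧ (∀ i, (ts i).valid) ∧ ∀ i, ¬ (ts i).isPar

/-- The depth of the tree: maximum number of edges on a root-to-leaf path. -/
def depth : NLCPlusTree k → ℕ
  | leaf _ => 0
  | join _ _ l r => max l.depth r.depth + 1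
  | par _ ts => (Finset.univ.sup fun i => (ts i).depth) + 1

end NLCPlusTree
section Aux

open SimpleGraph

variable {w : ℕ}

lemma sigmaGraph_adj_mk {ι : Type*} {f : ι → Type*} (G : ∀ i, SimpleGraph (f i)) {i : ι}
    {a b : f i} : (sigmaGraph G).Adj ⟨i, a⟩ ⟨i, b⟩ ↔ (G i).Adj a b := by
  constructor
  · rintro ⟨i', a', b', hab, h1, h2⟩
    cases h1
    cases h2
    exact hab
  · intro h; exact ⟨i, a, b, h, rfl, rfl⟩

lemma sigmaGraph_adj_fst {ι : Type*} {f : ι → Type*} {G : ∀ i, SimpleGraph (f i)}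
    {x y : Σ i, f i} (h : (sigmaGraph G).Adj x y) : x.1 = y.1 := by
  obtain ⟨i, a, b, hab, rfl, rfl⟩ := h
  rfl

lemma sigmaGraph_reachable_fst {ι : Type*} {f : ι → Type*} {G : ∀ i, SimpleGraph (f i)}
    {x y : Σ i, f i} (h : (sigmaGraph G).Reachable x y) : x.1 = y.1 := by
  obtain ⟨p⟩ := h
  induction p with
  | nil => rfl
  | cons h p ih => exact (sigmaGraph_adj_fst h).trans ih

/-- inclusion of a fiber into a sigma graph -/
def sigmaHom {ι : Type*} {f : ι → Type*} (G : ∀ i, SimpleGraph (f i)) (i : ι) :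
    G i →g sigmaGraph G where
  toFun a := ⟨i, a⟩
  map_rel' := fun h => ⟨i, _, _, h, rfl, rfl⟩

/-- congruence for sigma graphs along fiberwise isomorphisms -/
def sigmaCongrIso {ι : Type*} {f f' : ι → Type*} {G : ∀ i, SimpleGraph (f i)}
    {G' : ∀ i, SimpleGraph (f' i)} (h : ∀ i, G i ≃g G' i) :
    sigmaGraph G ≃g sigmaGraph G' where
  toEquiv := Equiv.sigmaCongrRight (fun i => (h i).toEquiv)
  map_rel_iff' := by
    rintro ⟨i, a⟩ ⟨j, b⟩
    constructor
    · intro hadj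
      obtain rfl : i = j := sigmaGraph_adj_fst hadj
      replace hadj : (sigmaGraph G').Adj ⟨i, h i a⟩ ⟨i, h i b⟩ := hadj
      rw [sigmaGraph_adj_mk] at hadj
      rw [sigmaGraph_adj_mk]
      exact (h i).map_rel_iff.mp hadj
    · intro hadj
      obtain rfl : i = j := sigmaGraph_adj_fst hadj
      rw [sigmaGraph_adj_mk] at hadj
      show (sigmaGraph G').Adj ⟨i, h i a⟩ ⟨i, h i b⟩
      rw [sigmaGraph_adj_mk]
      exact (h i).map_rel_iff.mpr hadj

/-- reindexing a sigma graph along an equivalence of index types -/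
def sigmaReindex {ι κ : Type*} {f : ι → Type*} (G : ∀ i, SimpleGraph (f i)) (e : κ ≃ ι) :
    sigmaGraph (fun k => G (e k)) ≃g sigmaGraph G where
  toEquiv := Equiv.sigmaCongrLeft (β := f) e
  map_rel_iff' := by
    rintro ⟨k, a⟩ ⟨k', b⟩
    simp only [Equiv.sigmaCongrLeft_apply]
    constructor
    · intro hadj
      obtain h : e k = e k' := sigmaGraph_adj_fst hadj
      obtain rfl : k = k' := e.injective h
      rw [sigmaGraph_adj_mk] at hadj ⊢
      exact hadj
    · intro hadj
      obtain rfl : k = k' := sigmaGraph_adj_fst hadj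
      rw [sigmaGraph_adj_mk] at hadj ⊢
      exact hadj

/-- equivalence collapsing a sigma over a `Unique` index -/
def sigmaUniqueEquiv {ι : Type*} [Unique ι] (f : ι → Type*) : (Σ i, f i) ≃ f default where
  toFun x := (Unique.eq_default x.1) ▸ x.2
  invFun a := ⟨default, a⟩
  left_inv := by
    rintro ⟨i, a⟩
    obtain rfl : i = default := Unique.eq_default i
    rfl
  right_inv := by intro a; rfl

/-- collapsing a sigma graph over a `Unique` index -/
def sigmaUniqueIso {ι : Type*} [Unique ι] {f : ι → Type*} (G : ∀ i, SimpleGraph (f i)) :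
    sigmaGraph G ≃g G default where
  toEquiv := sigmaUniqueEquiv f
  map_rel_iff' := by
    rintro ⟨i, a⟩ ⟨j, b⟩
    obtain rfl : i = default := Unique.eq_default i
    obtain rfl : j = default := Unique.eq_default j
    show (G default).Adj a b ↔ _
    exact (sigmaGraph_adj_mk G).symm

lemma sigmaUniqueEquiv_col {ι : Type*} [Unique ι] {f : ι → Type*}
    (col : ∀ i, f i → Fin w) (x : Σ i, f i) :
    col default (sigmaUniqueEquiv f x) = col x.1 x.2 := by
  obtain ⟨i, a⟩ := x
  obtain rfl : i = default := Unique.eq_default i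
  rfl

/-- congruence for join graphs -/
def joinCongrIso {α α' β β' : Type*} {G₁ : SimpleGraph α} {G₁' : SimpleGraph α'}
    {G₂ : SimpleGraph β} {G₂' : SimpleGraph β'} {c₁ : α → Fin w} {c₁' : α' → Fin w}
    {c₂ : β → Fin w} {c₂' : β' → Fin w} {S : Set (Fin w × Fin w)}
    (p : G₁ ≃g G₁') (q : G₂ ≃g G₂')
    (hp : ∀ a, c₁' (p a) = c₁ a) (hq : ∀ b, c₂' (q b) = c₂ b) :
    joinGraph G₁ G₂ c₁ c₂ S ≃g joinGraph G₁' G₂' c₁' c₂' S where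
  toEquiv := Equiv.sumCongr p.toEquiv q.toEquiv
  map_rel_iff' := by
    rintro (a | a) (b | b)
    · exact p.map_rel_iff
    · show ((c₁' (p a), c₂' (q b)) ∈ S) ↔ _
      rw [hp, hq]; rfl
    · show ((c₁' (p b), c₂' (q a)) ∈ S) ↔ _
      rw [hp, hq]; rfl
    · exact q.map_rel_iff

/-- join graph with empty right side -/
def joinEmptyRightIso {α β : Type*} [IsEmpty β] (G₁ : SimpleGraph α) (G₂ : SimpleGraph β)
    (c₁ : α → Fin w) (c₂ : β → Fin w) (S : Set (Fin w × Fin w)) :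
    joinGraph G₁ G₂ c₁ c₂ S ≃g G₁ where
  toEquiv := Equiv.sumEmpty α β
  map_rel_iff' := by
    rintro (a | a) (b | b)
    · rfl
    · exact isEmptyElim b
    · exact isEmptyElim a
    · exact isEmptyElim a

/-- join graph with empty left side -/
def joinEmptyLeftIso {α β : Type*} [IsEmpty α] (G₁ : SimpleGraph α) (G₂ : SimpleGraph β)
    (c₁ : α → Fin w) (c₂ : β → Fin w) (S : Set (Fin w × Fin w)) :
    joinGraph G₁ G₂ c₁ c₂ S ≃g G₂ where
  toEquiv := Equiv.emptySum α β
  map_rel_iff' := by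
    rintro (a | a) (b | b)
    · exact isEmptyElim a
    · exact isEmptyElim a
    · exact isEmptyElim b
    · rfl

end Aux
section Aux2

open SimpleGraph

variable {w : ℕ}

/-- bipartite "cross" graph recording which left indices can join to which right indices -/
def crossGraph {ι₁ ι₂ : Type*} (P : ι₁ → ι₂ → Prop) : SimpleGraph (ι₁ ⊕ ι₂) where
  Adj x y :=
    match x, y with
    | Sum.inl i, Sum.inr j => P i j
    | Sum.inr j, Sum.inl i => P i j
    | _, _ => False
  symm := by constructor; rintro (i | i) (j | j) h <;> exact h
  loopless := by constructor; rintro (i | i) h <;> exact h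

lemma crossGraph_adj_inl_inr {ι₁ ι₂ : Type*} {P : ι₁ → ι₂ → Prop} {i : ι₁} {j : ι₂} :
    (crossGraph P).Adj (Sum.inl i) (Sum.inr j) ↔ P i j := Iff.rfl

/-- if we can't escape to the right side, reachability among left vertices is trivial -/
lemma crossGraph_left_unique {ι₁ ι₂ : Type*} {P : ι₁ → ι₂ → Prop} {i i' : ι₁}
    (h : (crossGraph P).Reachable (Sum.inl i) (Sum.inl i'))
    (hempty : ∀ j : ι₂, (crossGraph P).connectedComponentMk (Sum.inr j) ≠
      (crossGraph P).connectedComponentMk (Sum.inl i)) : i = i' := by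
  obtain ⟨p⟩ := h
  cases p with
  | nil => rfl
  | @cons _ z _ hadj p' =>
    cases z with
    | inl i'' => exact hadj.elim
    | inr j =>
      exact absurd (SimpleGraph.ConnectedComponent.connectedComponentMk_eq_of_adj hadj.symm)
        (hempty j)

lemma crossGraph_right_unique {ι₁ ι₂ : Type*} {P : ι₁ → ι₂ → Prop} {j j' : ι₂}
    (h : (crossGraph P).Reachable (Sum.inr j) (Sum.inr j'))
    (hempty : ∀ i : ι₁, (crossGraph P).connectedComponentMk (Sum.inl i) ≠
      (crossGraph P).connectedComponentMk (Sum.inr j)) : j = j' := by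
  obtain ⟨p⟩ := h
  cases p with
  | nil => rfl
  | @cons _ z _ hadj p' =>
    cases z with
    | inr j'' => exact hadj.elim
    | inl i =>
      exact absurd (SimpleGraph.ConnectedComponent.connectedComponentMk_eq_of_adj hadj.symm)
        (hempty i)

section Restrict

variable {ι₁ ι₂ : Type*} (P : ι₁ → ι₂ → Prop) (c : (crossGraph P).ConnectedComponent)

/-- embedding of a pair of component fibers into the index sum -/
def toSub (x : ι₁ ⊕ ι₂) (h : (crossGraph P).connectedComponentMk x = c) :
    {i : ι₁ // (crossGraph P).connectedComponentMk (Sum.inl i) = c} ⊕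
    {j : ι₂ // (crossGraph P).connectedComponentMk (Sum.inr j) = c} :=
  match x, h with
  | Sum.inl i, h => Sum.inl ⟨i, h⟩
  | Sum.inr j, h => Sum.inr ⟨j, h⟩

lemma crossGraph_restrict_reachable :
    ∀ {x y : ι₁ ⊕ ι₂} (p : (crossGraph P).Walk x y)
      (hx : (crossGraph P).connectedComponentMk x = c)
      (hy : (crossGraph P).connectedComponentMk y = c),
      (crossGraph (fun x y => P x.1 y.1)).Reachable (toSub P c x hx) (toSub P c y hy) := by
  intro x y p
  induction p with
  | nil => intro hx hy; exact Reachable.refl _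
  | @cons x z y hadj p ih =>
    intro hx hy
    have hz : (crossGraph P).connectedComponentMk z = c :=
      (SimpleGraph.ConnectedComponent.connectedComponentMk_eq_of_adj hadj.symm).trans hx
    refine Reachable.trans (Adj.reachable ?_) (ih hz hy)
    cases x with
    | inl i =>
      cases z with
      | inl i' => exact hadj.elim
      | inr j => exact hadj
    | inr j =>
      cases z with
      | inl i => exact hadj
      | inr j' => exact hadj.elim

/-- the restriction of a cross graph to one of its connected components is connected -/
lemma crossGraph_restrict_connected :
    (crossGraph (fun (x : {i : ι₁ // (crossGraph P).connectedComponentMk (Sum.inl i) = c})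
      (y : {j : ι₂ // (crossGraph P).connectedComponentMk (Sum.inr j) = c}) =>
      P x.1 y.1)).Connected := by
  obtain ⟨x₀, hx₀⟩ := c.exists_rep
  haveI : Nonempty ({i : ι₁ // (crossGraph P).connectedComponentMk (Sum.inl i) = c} ⊕
      {j : ι₂ // (crossGraph P).connectedComponentMk (Sum.inr j) = c}) := by
    cases x₀ with
    | inl i => exact ⟨Sum.inl ⟨i, hx₀⟩⟩
    | inr j => exact ⟨Sum.inr ⟨j, hx₀⟩⟩
  constructor
  rintro u v
  have hmk : ∀ u : {i : ι₁ // (crossGraph P).connectedComponentMk (Sum.inl i) = c} ⊕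
      {j : ι₂ // (crossGraph P).connectedComponentMk (Sum.inr j) = c},
      ∃ (x : ι₁ ⊕ ι₂) (h : (crossGraph P).connectedComponentMk x = c), toSub P c x h = u := by
    rintro (⟨i, hi⟩ | ⟨j, hj⟩)
    · exact ⟨Sum.inl i, hi, rfl⟩
    · exact ⟨Sum.inr j, hj, rfl⟩
  obtain ⟨x, hx, rfl⟩ := hmk u
  obtain ⟨y, hy, rfl⟩ := hmk v
  have hreach : (crossGraph P).Reachable x y :=
    SimpleGraph.ConnectedComponent.exact (hx.trans hy.symm)
  obtain ⟨p⟩ := hreach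
  exact crossGraph_restrict_reachable P c p hx hy

end Restrict

end Aux2
section Aux3

open SimpleGraph

variable {w : ℕ}

/-- Key connectivity lemma: a join of two disjoint unions of connected graphs is connected
provided the associated cross graph on the indices is connected. -/
lemma joinSigma_connected {ι₁ ι₂ : Type*} {f₁ : ι₁ → Type*} {f₂ : ι₂ → Type*}
    (G₁ : ∀ i, SimpleGraph (f₁ i)) (G₂ : ∀ j, SimpleGraph (f₂ j))
    (c₁ : ∀ i, f₁ i → Fin w) (c₂ : ∀ j, f₂ j → Fin w) (S : Set (Fin w × Fin w))
    (h₁ : ∀ i, (G₁ i).Connected) (h₂ : ∀ j, (G₂ j).Connected)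
    (hK : (crossGraph (fun i j => ∃ a b, (c₁ i a, c₂ j b) ∈ S)).Connected) :
    (joinGraph (sigmaGraph G₁) (sigmaGraph G₂)
      (fun x => c₁ x.1 x.2) (fun y => c₂ y.1 y.2) S).Connected := by
  set B := joinGraph (sigmaGraph G₁) (sigmaGraph G₂)
      (fun x : Σ i, f₁ i => c₁ x.1 x.2) (fun y : Σ j, f₂ j => c₂ y.1 y.2) S with hB
  set K := crossGraph (fun i j => ∃ a b, (c₁ i a, c₂ j b) ∈ S) with hKdef
  haveI : ∀ i, Nonempty (f₁ i) := fun i => (h₁ i).nonempty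
  haveI : ∀ j, Nonempty (f₂ j) := fun j => (h₂ j).nonempty
  -- homs of the pieces into B
  let hom1 : ∀ i : ι₁, G₁ i →g B := fun i =>
    ⟨fun a => Sum.inl ⟨i, a⟩, fun h => show (sigmaGraph G₁).Adj _ _ from ⟨i, _, _, h, rfl, rfl⟩⟩
  let hom2 : ∀ j : ι₂, G₂ j →g B := fun j =>
    ⟨fun b => Sum.inr ⟨j, b⟩, fun h => show (sigmaGraph G₂).Adj _ _ from ⟨j, _, _, h, rfl, rfl⟩⟩
  have reachL : ∀ (i : ι₁) (a b : f₁ i), B.Reachable (Sum.inl ⟨i, a⟩) (Sum.inl ⟨i, b⟩) :=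
    fun i a b => ((h₁ i).preconnected a b).map (hom1 i)
  have reachR : ∀ (j : ι₂) (a b : f₂ j), B.Reachable (Sum.inr ⟨j, a⟩) (Sum.inr ⟨j, b⟩) :=
    fun j a b => ((h₂ j).preconnected a b).map (hom2 j)
  -- anchor vertices
  let vtx : ι₁ ⊕ ι₂ → (Σ i, f₁ i) ⊕ (Σ j, f₂ j) := fun x =>
    match x with
    | Sum.inl i => Sum.inl ⟨i, Classical.arbitrary _⟩
    | Sum.inr j => Sum.inr ⟨j, Classical.arbitrary _⟩
  have step : ∀ x y, K.Adj x y → B.Reachable (vtx x) (vtx y) := by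
    have key : ∀ (i : ι₁) (j : ι₂), K.Adj (Sum.inl i) (Sum.inr j) →
        B.Reachable (vtx (Sum.inl i)) (vtx (Sum.inr j)) := by
      intro i j hadj
      obtain ⟨a, b, hS⟩ := (crossGraph_adj_inl_inr).mp hadj
      have hAdj : B.Adj (Sum.inl ⟨i, a⟩) (Sum.inr ⟨j, b⟩) := hS
      exact ((reachL i _ a).trans hAdj.reachable).trans (reachR j b _)
    rintro (i | i) (j | j) hadj
    · exact hadj.elim
    · exact key i j hadj
    · exact (key j i hadj).symm
    · exact hadj.elim
  have walkstep : ∀ x y, K.Reachable x y → B.Reachable (vtx x) (vtx y) := by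
    intro x y h
    obtain ⟨p⟩ := h
    induction p with
    | nil => exact Reachable.refl _
    | cons hadj p ih => exact (step _ _ hadj).trans ih
  have anchor : ∀ u : (Σ i, f₁ i) ⊕ (Σ j, f₂ j),
      ∃ x : ι₁ ⊕ ι₂, B.Reachable u (vtx x) := by
    rintro (⟨i, a⟩ | ⟨j, b⟩)
    · exact ⟨Sum.inl i, reachL i a _⟩
    · exact ⟨Sum.inr j, reachR j b _⟩
  haveI : Nonempty ((Σ i, f₁ i) ⊕ (Σ j, f₂ j)) := by
    obtain ⟨x⟩ := hK.nonempty
    cases x with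
    | inl i => exact ⟨Sum.inl ⟨i, Classical.arbitrary _⟩⟩
    | inr j => exact ⟨Sum.inr ⟨j, Classical.arbitrary _⟩⟩
  constructor
  intro u v
  obtain ⟨x, hux⟩ := anchor u
  obtain ⟨y, hvy⟩ := anchor v
  exact (hux.trans (walkstep x y (hK.preconnected x y))).trans hvy.symm

end Aux3
section Aux4

open SimpleGraph

variable {w : ℕ}

section Regroup

variable {ι₁ ι₂ : Type*} {f₁ : ι₁ → Type*} {f₂ : ι₂ → Type*}
  (G₁ : ∀ i, SimpleGraph (f₁ i)) (G₂ : ∀ j, SimpleGraph (f₂ j))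
  (c₁ : ∀ i, f₁ i → Fin w) (c₂ : ∀ j, f₂ j → Fin w) (S : Set (Fin w × Fin w))
  {C : Type*} (comp : ι₁ ⊕ ι₂ → C)

/-- the graph induced on one group of a grouping of the indices -/
def groupGraph (c : C) : SimpleGraph
    ((Σ x : {i // comp (Sum.inl i) = c}, f₁ x.1) ⊕ (Σ y : {j // comp (Sum.inr j) = c}, f₂ y.1)) :=
  joinGraph (sigmaGraph (fun x : {i // comp (Sum.inl i) = c} => G₁ x.1))
    (sigmaGraph (fun y : {j // comp (Sum.inr j) = c} => G₂ y.1))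
    (fun p => c₁ p.1.1 p.2) (fun p => c₂ p.1.1 p.2) S

/-- the regrouping equivalence -/
def regroupEquiv : (Σ c : C, (Σ x : {i // comp (Sum.inl i) = c}, f₁ x.1) ⊕
    (Σ y : {j // comp (Sum.inr j) = c}, f₂ y.1)) ≃ (Σ i, f₁ i) ⊕ (Σ j, f₂ j) where
  toFun p :=
    match p with
    | ⟨_, Sum.inl ⟨x, a⟩⟩ => Sum.inl ⟨x.1, a⟩
    | ⟨_, Sum.inr ⟨y, b⟩⟩ => Sum.inr ⟨y.1, b⟩
  invFun u :=
    match u with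
    | Sum.inl ⟨i, a⟩ => ⟨comp (Sum.inl i), Sum.inl ⟨⟨i, rfl⟩, a⟩⟩
    | Sum.inr ⟨j, b⟩ => ⟨comp (Sum.inr j), Sum.inr ⟨⟨j, rfl⟩, b⟩⟩
  left_inv := by
    rintro ⟨c, (⟨⟨i, h⟩, a⟩ | ⟨⟨j, h⟩, b⟩)⟩ <;> subst h <;> rfl
  right_inv := by
    rintro (⟨i, a⟩ | ⟨j, b⟩) <;> rfl

variable (hcross : ∀ i j, (∃ a b, (c₁ i a, c₂ j b) ∈ S) → comp (Sum.inl i) = comp (Sum.inr j))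

/-- cross adjacency in the regrouped sigma graph, helper -/
lemma groupGraph_cross_adj {c c' : C} (hc : c = c') (i : ι₁) (pi : comp (Sum.inl i) = c)
    (a : f₁ i) (j : ι₂) (pj : comp (Sum.inr j) = c') (b : f₂ j)
    (hS : (c₁ i a, c₂ j b) ∈ S) :
    (sigmaGraph (groupGraph G₁ G₂ c₁ c₂ S comp)).Adj
      ⟨c, Sum.inl ⟨⟨i, pi⟩, a⟩⟩ ⟨c', Sum.inr ⟨⟨j, pj⟩, b⟩⟩ := by
  subst hc
  exact (sigmaGraph_adj_mk _).mpr hS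

/-- the regrouping isomorphism of graphs -/
def regroupIso :
    joinGraph (sigmaGraph G₁) (sigmaGraph G₂) (fun x => c₁ x.1 x.2) (fun y => c₂ y.1 y.2) S ≃g
    sigmaGraph (groupGraph G₁ G₂ c₁ c₂ S comp) := by
  refine RelIso.symm ⟨regroupEquiv comp, ?_⟩
  have h2 : ∀ u v, (joinGraph (sigmaGraph G₁) (sigmaGraph G₂)
      (fun x : Σ i, f₁ i => c₁ x.1 x.2) (fun y : Σ j, f₂ j => c₂ y.1 y.2) S).Adj u v →
      (sigmaGraph (groupGraph G₁ G₂ c₁ c₂ S comp)).Adj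
        ((regroupEquiv comp).symm u) ((regroupEquiv comp).symm v) := by
    rintro (⟨i, a⟩ | ⟨j, b⟩) (⟨i', a'⟩ | ⟨j', b'⟩) h
    · obtain rfl : i = i' := sigmaGraph_adj_fst h
      replace h : (sigmaGraph G₁).Adj ⟨i, a⟩ ⟨i, a'⟩ := h
      rw [sigmaGraph_adj_mk] at h
      exact (sigmaGraph_adj_mk _).mpr ((sigmaGraph_adj_mk _).mpr h)
    · exact groupGraph_cross_adj G₁ G₂ c₁ c₂ S comp (hcross i j' ⟨a, b', h⟩) i rfl a j' rfl b' h
    · exact (groupGraph_cross_adj G₁ G₂ c₁ c₂ S comp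
        (hcross i' j ⟨a', b, h⟩) i' rfl a' j rfl b h).symm
    · obtain rfl : j = j' := sigmaGraph_adj_fst h
      replace h : (sigmaGraph G₂).Adj ⟨j, b⟩ ⟨j, b'⟩ := h
      rw [sigmaGraph_adj_mk] at h
      exact (sigmaGraph_adj_mk _).mpr ((sigmaGraph_adj_mk _).mpr h)
  intro x y
  constructor
  · intro h
    have := h2 _ _ h
    rwa [Equiv.symm_apply_apply, Equiv.symm_apply_apply] at this
  · rintro ⟨c, u, v, hJ, rfl, rfl⟩
    rcases u with (us | us) <;> rcases v with (vs | vs)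
    · rcases hJ with ⟨x, a₀, b₀, hab, rfl, rfl⟩
      exact (sigmaGraph_adj_mk _).mpr hab
    · rcases us with ⟨x, a⟩; rcases vs with ⟨y, b⟩
      exact hJ
    · rcases us with ⟨y, b⟩; rcases vs with ⟨x, a⟩
      exact hJ
    · rcases hJ with ⟨y, a₀, b₀, hab, rfl, rfl⟩
      exact (sigmaGraph_adj_mk _).mpr hab

end Regroup

namespace NLCPlusTree

/-- change the colors produced at the root of a tree -/
def recolorTop (ρ : Fin w → Fin w) : NLCPlusTree w → NLCPlusTree w
  | leaf c => leaf (ρ c)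
  | join S R l r => join S (fun x => ρ (R x)) l r
  | par m ts => par m ts

lemma recolorTop_valid {ρ : Fin w → Fin w} {t : NLCPlusTree w} (h : t.valid) :
    (recolorTop ρ t).valid := by cases t <;> exact h

lemma recolorTop_not_isPar {ρ : Fin w → Fin w} {t : NLCPlusTree w} (h : ¬ t.isPar) :
    ¬ (recolorTop ρ t).isPar := by cases t <;> exact h

lemma recolorTop_depth (ρ : Fin w → Fin w) (t : NLCPlusTree w) :
    (recolorTop ρ t).depth = t.depth := by cases t <;> rfl

lemma recolorTop_iso (ρ : Fin w → Fin w) (t : NLCPlusTree w) (h : ¬ t.isPar) :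
    ∃ ψ : t.graph ≃g (recolorTop ρ t).graph,
      ∀ v, (recolorTop ρ t).coloring (ψ v) = ρ (t.coloring v) := by
  cases t with
  | leaf c => exact ⟨⟨Equiv.refl _, Iff.rfl⟩, fun v => rfl⟩
  | join S R l r => exact ⟨⟨Equiv.refl _, Iff.rfl⟩, fun v => rfl⟩
  | par m ts => exact absurd trivial h

end NLCPlusTree

/-- packaging a finite nonempty family of valid non-par trees into a single tree,
either the unique member or a `par` node -/
lemma parOf {ι : Type} [Fintype ι] [Nonempty ι] (ts : ι → NLCPlusTree w)
    (hval : ∀ i, (ts i).valid) (hpar : ∀ i, ¬ (ts i).isPar) (D : ℕ)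
    (hD : ∀ i, (ts i).depth ≤ D) :
    ∃ P : NLCPlusTree w, P.valid ∧ P.depth ≤ D + 1 ∧
      ∃ ψ : sigmaGraph (fun i => (ts i).graph) ≃g P.graph,
        ∀ x : Σ i, (ts i).V, P.coloring (ψ x) = (ts x.1).coloring x.2 := by
  by_cases hsub : Subsingleton ι
  · haveI := hsub
    haveI : Unique ι := uniqueOfSubsingleton (Classical.arbitrary ι)
    refine ⟨ts default, hval _, (hD _).trans (Nat.le_succ D), sigmaUniqueIso _, ?_⟩
    intro x
    exact sigmaUniqueEquiv_col (fun i => (ts i).coloring) x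
  · haveI : Nontrivial ι := not_subsingleton_iff_nontrivial.mp hsub
    set e := Fintype.equivFin ι with he
    refine ⟨.par (Fintype.card ι) (fun j => ts (e.symm j)),
      ⟨Fintype.one_lt_card_iff_nontrivial.mpr ‹_›, fun j => hval _, fun j => hpar _⟩, ?_, ?_⟩
    · show (Finset.univ.sup fun j => (ts (e.symm j)).depth) + 1 ≤ D + 1
      exact Nat.succ_le_succ (Finset.sup_le fun j _ => hD _)
    · refine ⟨(sigmaReindex (fun i => (ts i).graph) e.symm).symm, ?_⟩
      intro x
      have h2 : ∀ y : Σ j : Fin (Fintype.card ι), (ts (e.symm j)).V,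
          (NLCPlusTree.par _ (fun j => ts (e.symm j))).coloring y =
          (ts ((sigmaReindex (fun i => (ts i).graph) e.symm) y).1).coloring
            ((sigmaReindex (fun i => (ts i).graph) e.symm) y).2 := by
        rintro ⟨j, a⟩; rfl
      have h3 := h2 ((sigmaReindex (fun i => (ts i).graph) e.symm).symm x)
      rw [RelIso.apply_symm_apply] at h3
      exact h3

end Aux4
section Main

open SimpleGraph

variable {w : ℕ}

theorem NLC_decomp (t : NLCTree w) :
    ∃ (ι : Type) (_ : Fintype ι) (ts : ι → NLCPlusTree w),
      (∀ i, (ts i).valid) ∧ (∀ i, ¬ (ts i).isPar) ∧ (∀ i, (ts i).graph.Connected) ∧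
      (∀ i, (ts i).depth ≤ 2 * t.depth) ∧
      ∃ e : t.graph ≃g sigmaGraph (fun i => (ts i).graph),
        ∀ v, (ts (e v).1).coloring (e v).2 = t.coloring v := by
  induction t with
  | leaf c =>
    have E : (NLCTree.leaf c : NLCTree w).V ≃
        Σ _ : PUnit, (NLCPlusTree.leaf c : NLCPlusTree w).V :=
      ⟨fun _ => ⟨PUnit.unit, PUnit.unit⟩, fun _ => PUnit.unit, fun _ => rfl, fun _ => rfl⟩
    have iso : (NLCTree.leaf c : NLCTree w).graph ≃g
        sigmaGraph (fun _ : PUnit => (NLCPlusTree.leaf c : NLCPlusTree w).graph) := by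
      refine { toEquiv := E, map_rel_iff' := ?_ }
      intro u v
      constructor
      · rintro ⟨i, a, b, hab, -, -⟩; exact hab.elim
      · intro h; exact h.elim
    refine ⟨PUnit, inferInstance, fun _ => .leaf c, fun _ => trivial, fun _ => fun h => h,
      fun _ => { preconnected := fun u v => SimpleGraph.Reachable.refl u, nonempty := ⟨()⟩ },
      fun _ => Nat.le_refl 0, iso, fun v => rfl⟩
  | node S R l r ihl ihr =>
    classical
    obtain ⟨ι₁, hfin₁, ls, hv₁, hp₁, hc₁, hd₁, e₁, hcol₁⟩ := ihl
    obtain ⟨ι₂, hfin₂, rs, hv₂, hp₂, hc₂, hd₂, e₂, hcol₂⟩ := ihr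
    haveI := hfin₁; haveI := hfin₂
    set R' : Fin w → Fin w := R.getD id with hR'
    set P : ι₁ → ι₂ → Prop :=
      fun i j => ∃ a b, ((ls i).coloring a, (rs j).coloring b) ∈ S with hP
    set K : SimpleGraph (ι₁ ⊕ ι₂) := crossGraph P with hKdef
    set comp : ι₁ ⊕ ι₂ → K.ConnectedComponent := K.connectedComponentMk with hcomp
    haveI : Finite K.ConnectedComponent := Quot.finite _
    haveI : Fintype K.ConnectedComponent := Fintype.ofFinite _
    let Jc : ∀ c : K.ConnectedComponent, SimpleGraph
        ((Σ x : {i // comp (Sum.inl i) = c}, (ls x.1).V) ⊕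
          (Σ y : {j // comp (Sum.inr j) = c}, (rs y.1).V)) :=
      groupGraph (fun i => (ls i).graph) (fun j => (rs j).graph)
        (fun i => (ls i).coloring) (fun j => (rs j).coloring) S comp
    have key : ∀ c : K.ConnectedComponent, ∃ tp : NLCPlusTree w,
        tp.valid ∧ ¬ tp.isPar ∧ tp.graph.Connected ∧
        tp.depth ≤ 2 * (max l.depth r.depth + 1) ∧
        ∃ ψ : Jc c ≃g tp.graph, ∀ u, tp.coloring (ψ u) =
          R' (Sum.elim (fun p => (ls p.1.1).coloring p.2)
              (fun p => (rs p.1.1).coloring p.2) u) := by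
      intro c
      obtain ⟨x₀, hx₀⟩ := c.exists_rep
      by_cases hL : Nonempty {i // comp (Sum.inl i) = c} <;>
        by_cases hRne : Nonempty {j // comp (Sum.inr j) = c}
      · -- mixed case
        haveI := hL; haveI := hRne
        obtain ⟨PL, hPLval, hPLdepth, ψL, hψL⟩ :=
          parOf (fun x : {i // comp (Sum.inl i) = c} => ls x.1) (fun x => hv₁ x.1)
            (fun x => hp₁ x.1) (2 * l.depth) (fun x => hd₁ x.1)
        obtain ⟨PR, hPRval, hPRdepth, ψR, hψR⟩ :=
          parOf (fun y : {j // comp (Sum.inr j) = c} => rs y.1) (fun y => hv₂ y.1)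
            (fun y => hp₂ y.1) (2 * r.depth) (fun y => hd₂ y.1)
        have hconn : (Jc c).Connected := by
          refine joinSigma_connected (fun x : {i // comp (Sum.inl i) = c} => (ls x.1).graph)
            (fun y : {j // comp (Sum.inr j) = c} => (rs y.1).graph)
            (fun x => (ls x.1).coloring) (fun y => (rs y.1).coloring) S
            (fun x => hc₁ x.1) (fun y => hc₂ y.1) ?_
          exact crossGraph_restrict_connected P c
        let ψ : Jc c ≃g (NLCPlusTree.join S R' PL PR).graph := joinCongrIso ψL ψR hψL hψR
        have hconn2 : (NLCPlusTree.join S R' PL PR).graph.Connected :=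
          (SimpleGraph.Iso.connected_iff ψ).mp hconn
        refine ⟨.join S R' PL PR, ⟨hPLval, hPRval, hconn2⟩, fun h => h, hconn2, ?_, ψ, ?_⟩
        · show max PL.depth PR.depth + 1 ≤ 2 * (max l.depth r.depth + 1)
          have hm1 : l.depth ≤ max l.depth r.depth := Nat.le_max_left _ _
          have hm2 : r.depth ≤ max l.depth r.depth := Nat.le_max_right _ _
          have h3 : max PL.depth PR.depth ≤ 2 * max l.depth r.depth + 1 :=
            max_le (by omega) (by omega)
          omega
        · rintro (x | y)
          · show R' (PL.coloring (ψL x)) = _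
            rw [hψL]
            rfl
          · show R' (PR.coloring (ψR y)) = _
            rw [hψR]
            rfl
      · -- left singleton
        have hex : ∃ i, comp (Sum.inl i) = c := by
          cases x₀ with
          | inl i => exact ⟨i, hx₀⟩
          | inr j => exact absurd ⟨⟨j, hx₀⟩⟩ hRne
        obtain ⟨i, hi⟩ := hex
        have huniq : ∀ x : {i' // comp (Sum.inl i') = c}, x = ⟨i, hi⟩ := by
          rintro ⟨i', hi'⟩
          refine Subtype.ext ?_
          refine (crossGraph_left_unique (P := P)
            (SimpleGraph.ConnectedComponent.exact (hi.trans hi'.symm)) ?_).symm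
          intro j hj
          exact hRne ⟨⟨j, hj.trans hi⟩⟩
        letI : Unique {i' // comp (Sum.inl i') = c} := ⟨⟨⟨i, hi⟩⟩, huniq⟩
        haveI : IsEmpty {j // comp (Sum.inr j) = c} := not_nonempty_iff.mp hRne
        haveI : IsEmpty (Σ y : {j // comp (Sum.inr j) = c}, (rs y.1).V) :=
          ⟨fun x => isEmptyElim x.1⟩
        obtain ⟨ψrec, hψrec⟩ := NLCPlusTree.recolorTop_iso R' (ls i) (hp₁ i)
        let ψ : Jc c ≃g (NLCPlusTree.recolorTop R' (ls i)).graph :=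
          ((joinEmptyRightIso _ _ _ _ S).trans
            (sigmaUniqueIso (fun x : {i' // comp (Sum.inl i') = c} => (ls x.1).graph))).trans ψrec
        refine ⟨NLCPlusTree.recolorTop R' (ls i), NLCPlusTree.recolorTop_valid (hv₁ i),
          NLCPlusTree.recolorTop_not_isPar (hp₁ i),
          (SimpleGraph.Iso.connected_iff ψrec).mp (hc₁ i), ?_, ψ, ?_⟩
        · rw [NLCPlusTree.recolorTop_depth]
          have hm1 : l.depth ≤ max l.depth r.depth := Nat.le_max_left _ _
          have := hd₁ i
          omega
        · rintro (⟨x, a⟩ | y)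
          · obtain ⟨i', hi'⟩ := x
            obtain rfl : i' = i := congrArg Subtype.val (huniq ⟨i', hi'⟩)
            exact hψrec a
          · exact isEmptyElim y
      · -- right singleton
        have hex : ∃ j, comp (Sum.inr j) = c := by
          cases x₀ with
          | inr j => exact ⟨j, hx₀⟩
          | inl i => exact absurd ⟨⟨i, hx₀⟩⟩ hL
        obtain ⟨j, hj⟩ := hex
        have huniq : ∀ y : {j' // comp (Sum.inr j') = c}, y = ⟨j, hj⟩ := by
          rintro ⟨j', hj'⟩
          refine Subtype.ext ?_
          refine (crossGraph_right_unique (P := P)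
            (SimpleGraph.ConnectedComponent.exact (hj.trans hj'.symm)) ?_).symm
          intro i hij
          exact hL ⟨⟨i, hij.trans hj⟩⟩
        letI : Unique {j' // comp (Sum.inr j') = c} := ⟨⟨⟨j, hj⟩⟩, huniq⟩
        haveI : IsEmpty {i // comp (Sum.inl i) = c} := not_nonempty_iff.mp hL
        haveI : IsEmpty (Σ x : {i // comp (Sum.inl i) = c}, (ls x.1).V) :=
          ⟨fun x => isEmptyElim x.1⟩
        obtain ⟨ψrec, hψrec⟩ := NLCPlusTree.recolorTop_iso R' (rs j) (hp₂ j)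
        let ψ : Jc c ≃g (NLCPlusTree.recolorTop R' (rs j)).graph :=
          ((joinEmptyLeftIso _ _ _ _ S).trans
            (sigmaUniqueIso (fun y : {j' // comp (Sum.inr j') = c} => (rs y.1).graph))).trans ψrec
        refine ⟨NLCPlusTree.recolorTop R' (rs j), NLCPlusTree.recolorTop_valid (hv₂ j),
          NLCPlusTree.recolorTop_not_isPar (hp₂ j),
          (SimpleGraph.Iso.connected_iff ψrec).mp (hc₂ j), ?_, ψ, ?_⟩
        · rw [NLCPlusTree.recolorTop_depth]
          have hm2 : r.depth ≤ max l.depth r.depth := Nat.le_max_right _ _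
          have := hd₂ j
          omega
        · rintro (x | ⟨y, b⟩)
          · exact isEmptyElim x
          · obtain ⟨j', hj'⟩ := y
            obtain rfl : j' = j := congrArg Subtype.val (huniq ⟨j', hj'⟩)
            exact hψrec b
      · -- impossible
        exfalso
        cases x₀ with
        | inl i => exact hL ⟨⟨i, hx₀⟩⟩
        | inr j => exact hRne ⟨⟨j, hx₀⟩⟩
    choose ts hval hpar hconn hdepth hiso using key
    choose ψc hψc using hiso
    have hcross : ∀ (i : ι₁) (j : ι₂),
        (∃ a b, ((ls i).coloring a, (rs j).coloring b) ∈ S) →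
        comp (Sum.inl i) = comp (Sum.inr j) := by
      intro i j hp
      exact SimpleGraph.ConnectedComponent.connectedComponentMk_eq_of_adj
        (show K.Adj (Sum.inl i) (Sum.inr j) from hp)
    let jciso : (NLCTree.node S R l r).graph ≃g
        joinGraph (sigmaGraph fun i => (ls i).graph) (sigmaGraph fun j => (rs j).graph)
          (fun x => (ls x.1).coloring x.2) (fun y => (rs y.1).coloring y.2) S :=
      joinCongrIso e₁ e₂ hcol₁ hcol₂
    let rg := regroupIso (fun i => (ls i).graph) (fun j => (rs j).graph)
      (fun i => (ls i).coloring) (fun j => (rs j).coloring) S comp hcross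
    let sci : sigmaGraph Jc ≃g sigmaGraph (fun c => (ts c).graph) := sigmaCongrIso ψc
    refine ⟨K.ConnectedComponent, inferInstance, ts, hval, hpar, hconn, hdepth,
      (jciso.trans rg).trans sci, ?_⟩
    have claimA : ∀ z : Σ c, ((Σ x : {i // comp (Sum.inl i) = c}, (ls x.1).V) ⊕
        (Σ y : {j // comp (Sum.inr j) = c}, (rs y.1).V)),
        (ts (sci z).1).coloring ((sci z).2) =
        R' (Sum.elim (fun p => (ls p.1.1).coloring p.2)
            (fun p => (rs p.1.1).coloring p.2) z.2) := by
      rintro ⟨c, u⟩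
      exact hψc c u
    intro v
    have hA := claimA (rg (jciso v))
    have hE : (ts (((jciso.trans rg).trans sci) v).1).coloring ((((jciso.trans rg).trans sci) v).2)
        = (ts (sci (rg (jciso v))).1).coloring ((sci (rg (jciso v))).2) := rfl
    rw [hE, hA]
    -- now compute the group coloring of (rg (jciso v))
    rcases v with a | b
    · have hB : ∀ x : Σ i, (ls i).V,
          Sum.elim (fun p => (ls p.1.1).coloring p.2)
            (fun p => (rs p.1.1).coloring p.2) (rg (Sum.inl x)).2 = (ls x.1).coloring x.2 := by
        rintro ⟨i, av⟩; rfl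
      show R' _ = R' (Sum.elim l.coloring r.coloring (Sum.inl a))
      rw [show (jciso (Sum.inl a) : (Σ i, (ls i).V) ⊕ (Σ j, (rs j).V)) = Sum.inl (e₁ a) from rfl,
        hB (e₁ a), hcol₁ a]
      rfl
    · have hB : ∀ y : Σ j, (rs j).V,
          Sum.elim (fun p => (ls p.1.1).coloring p.2)
            (fun p => (rs p.1.1).coloring p.2) (rg (Sum.inr y)).2 = (rs y.1).coloring y.2 := by
        rintro ⟨j, bv⟩; rfl
      show R' _ = R' (Sum.elim l.coloring r.coloring (Sum.inr b))
      rw [show (jciso (Sum.inr b) : (Σ i, (ls i).V) ⊕ (Σ j, (rs j).V)) = Sum.inr (e₂ b) from rfl,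
        hB (e₂ b), hcol₂ b]
      rfl

end Main

/-- If a connected graph `G` admits an NLC-decomposition tree `T` of width `w` and depth
`d`, then it admits an NLC⁺-decomposition tree of width `w` and depth at most `2·d`
which moreover gives every vertex of `G` the same color (at the root) as `T` does. -/
theorem NLC_to_NLCplus_decomposition
    (V : Type*) [Fintype V] (G : SimpleGraph V) (hc : G.Connected)
    (w : ℕ) (T : NLCTree w) (φ : G ≃g T.graph) :
    ∃ (Tp : NLCPlusTree w), Tp.valid ∧ Tp.depth ≤ 2 * T.depth ∧
      ∃ ψ : G ≃g Tp.graph, ∀ v : V, Tp.coloring (ψ v) = T.coloring (φ v) := by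
  classical
  obtain ⟨ι, hfin, ts, hval, hpar, hconn, hdepth, e, hcol⟩ := NLC_decomp T
  haveI := hfin
  obtain ⟨v₀⟩ := hc.nonempty
  haveI : Nonempty ι := ⟨(e (φ v₀)).1⟩
  haveI hsub : Subsingleton ι := by
    constructor
    intro i j
    obtain ⟨a⟩ := (hconn i).nonempty
    obtain ⟨b⟩ := (hconn j).nonempty
    have hσ : (sigmaGraph fun i => (ts i).graph).Connected :=
      (SimpleGraph.Iso.connected_iff (φ.trans e)).mp hc
    exact sigmaGraph_reachable_fst (hσ.preconnected ⟨i, a⟩ ⟨j, b⟩)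
  letI : Unique ι := uniqueOfSubsingleton (Classical.arbitrary ι)
  refine ⟨ts default, hval _, hdepth _, (φ.trans e).trans (sigmaUniqueIso _), ?_⟩
  intro v
  have h1 := sigmaUniqueEquiv_col (fun i => (ts i).coloring) (e (φ v))
  exact h1.trans (hcol (φ v))
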